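/- Let X be a Banach space and let Θ : (0,1) → ℝ² be a continuous integrable map, with the ℓ^p norm on ℝ² for some 1 < p < ∞. Then ‖∫₀¹ Θ(t) dt‖_{ℓ^p} ≤ ∫₀¹ ‖Θ(t)‖_{ℓ^p} dt, and equality holds if and only if either Θ(t₀) = 0 for almost every t₀, or there exists a set M ⊆ (0,1) of full measure and t₀ ∈ M with Θ(t₀) ≠ 0 such that for every t ∈ M there is λ_t ≥ 0 with Θ(t) = λ_t Θ(t₀). -/

import Mathlib

open MeasureTheory
open scoped ENNReal

lemma piLp_strictConvexSpace (p : ℝ≥0∞) [Fact (1 ≤ p)] (hp : 1 < p) (hptop : p ≠ ⊤) :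
    StrictConvexSpace ℝ (PiLp p (fun _ : Fin 2 => ℝ)) := by
  have hq : 1 < p.toReal := by
    have := (ENNReal.toReal_lt_toReal (by simp) hptop).2 hp
    simpa using this
  set q := p.toReal with hqdef
  have hq0 : 0 < q := by linarith
  apply StrictConvexSpace.of_norm_add_ne_two
  intro x y hx hy hne
  have norm_eq : ∀ z : PiLp p (fun _ : Fin 2 => ℝ),
      ‖z‖ = (∑ i, |z i| ^ q) ^ (1 / q) := by
    intro z
    rw [PiLp.norm_eq_sum hq0]
    simp [Real.norm_eq_abs, hqdef]
  have sum_eq : ∀ z : PiLp p (fun _ : Fin 2 => ℝ), ‖z‖ = 1 → ∑ i, |z i| ^ q = 1 := by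
    intro z hz
    have h1 : (∑ i, |z i| ^ q) ^ (1 / q) = 1 := by rw [← norm_eq z, hz]
    have hnn : 0 ≤ ∑ i, |z i| ^ q :=
      Finset.sum_nonneg fun i _ => Real.rpow_nonneg (abs_nonneg _) _
    rw [one_div] at h1
    calc ∑ i, |z i| ^ q = ((∑ i, |z i| ^ q) ^ q⁻¹) ^ q := (Real.rpow_inv_rpow hnn hq0.ne').symm
    _ = 1 ^ q := by rw [h1]
    _ = 1 := Real.one_rpow q
  have hx2 := sum_eq x hx
  have hy2 := sum_eq y hy
  -- strict convexity of |a|^q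
  have habs : StrictConvexOn ℝ Set.univ (fun a : ℝ => |a| ^ q) := by
    constructor
    · exact convex_univ
    · intro u _ v _ huv a b ha hb hab
      have hmid : |a • u + b • v| ≤ a * |u| + b * |v| := by
        calc |a * u + b * v| ≤ |a * u| + |b * v| := abs_add_le _ _
        _ = a * |u| + b * |v| := by rw [abs_mul, abs_mul, abs_of_pos ha, abs_of_pos hb]
      rcases eq_or_ne |u| |v| with he | he
      · -- |u| = |v|, u ≠ v ⇒ u = -v, |v| > 0
        have hv0 : v ≠ 0 := by rintro rfl; simp at he; exact huv (by simpa using he)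
        have hu : u = -v := (abs_eq_abs.1 he).resolve_left huv
        have hlt : |a • u + b • v| < |v| := by
          rw [hu]
          have : a • (-v) + b • v = (b - a) * v := by ring_nf
          rw [this, abs_mul]
          have h1 : |b - a| < 1 := by rw [abs_lt]; constructor <;> linarith
          calc |b - a| * |v| < 1 * |v| := by
                exact mul_lt_mul_of_pos_right h1 (abs_pos.2 hv0)
          _ = |v| := one_mul _
        calc |a • u + b • v| ^ q < |v| ^ q :=
              Real.rpow_lt_rpow (abs_nonneg _) hlt hq0
        _ = a * |u| ^ q + b * |v| ^ q := by rw [he, ← add_mul, hab, one_mul]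
      · have h1 : (a * |u| + b * |v|) ^ q < a * |u| ^ q + b * |v| ^ q := by
          have := (strictConvexOn_rpow hq).2 (Set.mem_Ici.2 (abs_nonneg u))
            (Set.mem_Ici.2 (abs_nonneg v)) he ha hb hab
          simpa [smul_eq_mul] using this
        calc |a • u + b • v| ^ q ≤ (a * |u| + b * |v|) ^ q :=
              Real.rpow_le_rpow (abs_nonneg _) hmid hq0.le
        _ < _ := h1
  -- now show ‖x + y‖ < 2
  have key : ∑ i, |x i + y i| ^ q < 2 ^ q := by
    have hne' : ∃ i, x i ≠ y i := by
      by_contra h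
      push_neg at h
      exact hne (WithLp.ofLp_injective p (funext h))
    obtain ⟨i₀, hi₀⟩ := hne'
    have hle : ∀ i ∈ Finset.univ, |x i + y i| ^ q ≤
        (1/2) * |2 * x i| ^ q + (1/2) * |2 * y i| ^ q := by
      intro i _
      have := habs.convexOn.2 (Set.mem_univ (2 * x i)) (Set.mem_univ (2 * y i))
        (by norm_num : (0:ℝ) ≤ 1/2) (by norm_num : (0:ℝ) ≤ 1/2) (by norm_num)
      have heq : (1/2 : ℝ) • (2 * x i) + (1/2 : ℝ) • (2 * y i) = x i + y i := by
        rw [smul_eq_mul, smul_eq_mul]; ring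
      rw [heq] at this
      simpa [smul_eq_mul] using this
    have hlt : |x i₀ + y i₀| ^ q <
        (1/2) * |2 * x i₀| ^ q + (1/2) * |2 * y i₀| ^ q := by
      have := habs.2 (Set.mem_univ (2 * x i₀)) (Set.mem_univ (2 * y i₀))
        (fun h => hi₀ (mul_left_cancel₀ two_ne_zero h))
        (by norm_num : (0:ℝ) < 1/2) (by norm_num : (0:ℝ) < 1/2) (by norm_num)
      have heq : (1/2 : ℝ) • (2 * x i₀) + (1/2 : ℝ) • (2 * y i₀) = x i₀ + y i₀ := by
        rw [smul_eq_mul, smul_eq_mul]; ring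
      rw [heq] at this
      simpa [smul_eq_mul] using this
    calc ∑ i, |x i + y i| ^ q
        < ∑ i, ((1/2) * |2 * x i| ^ q + (1/2) * |2 * y i| ^ q) :=
          Finset.sum_lt_sum hle ⟨i₀, Finset.mem_univ _, hlt⟩
    _ = 2 ^ q := by
        have h2 : ∀ a : ℝ, |2 * a| ^ q = 2 ^ q * |a| ^ q := by
          intro a
          rw [abs_mul, abs_two, Real.mul_rpow (by norm_num) (abs_nonneg _)]
        simp only [h2, Fin.sum_univ_two] at hx2 hy2 ⊢
        linear_combination (2 ^ q / 2) * hx2 + (2 ^ q / 2) * hy2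
  have hfin : ‖x + y‖ < 2 := by
    rw [norm_eq]
    have hnn : 0 ≤ ∑ i, |(x + y) i| ^ q :=
      Finset.sum_nonneg fun i _ => Real.rpow_nonneg (abs_nonneg _) _
    calc (∑ i, |(x + y) i| ^ q) ^ (1 / q) < (2 ^ q) ^ (1 / q) :=
          Real.rpow_lt_rpow hnn (by simpa [PiLp.add_apply] using key) (by positivity)
    _ = 2 := by rw [one_div, Real.rpow_rpow_inv (by norm_num) hq0.ne']
  exact hfin.ne

theorem stmt_7 (p : ℝ≥0∞) [Fact (1 ≤ p)] (hp : 1 < p) (hptop : p ≠ ⊤)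
    (Θ : ℝ → PiLp p (fun _ : Fin 2 => ℝ))
    (hcont : ContinuousOn Θ (Set.Ioo 0 1))
    (hint : IntegrableOn Θ (Set.Ioo (0 : ℝ) 1) volume) :
    ‖∫ t in Set.Ioo (0 : ℝ) 1, Θ t‖ ≤ (∫ t in Set.Ioo (0 : ℝ) 1, ‖Θ t‖) ∧
    (‖∫ t in Set.Ioo (0 : ℝ) 1, Θ t‖ = (∫ t in Set.Ioo (0 : ℝ) 1, ‖Θ t‖) ↔
      ((∀ᵐ t ∂(volume.restrict (Set.Ioo (0 : ℝ) 1)), Θ t = 0) ∨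
        ∃ M ⊆ Set.Ioo (0 : ℝ) 1, volume (Set.Ioo (0 : ℝ) 1 \ M) = 0 ∧
          ∃ t₀ ∈ M, Θ t₀ ≠ 0 ∧ ∀ t ∈ M, ∃ l : ℝ, 0 ≤ l ∧ Θ t = l • Θ t₀)) := by
  haveI : StrictConvexSpace ℝ (PiLp p (fun _ : Fin 2 => ℝ)) := piLp_strictConvexSpace p hp hptop
  set μ := volume.restrict (Set.Ioo (0 : ℝ) 1) with hμ
  have hIoo : MeasurableSet (Set.Ioo (0:ℝ) 1) := measurableSet_Ioo
  have hnint : Integrable (fun t => ‖Θ t‖) μ := hint.norm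
  have hineq : ‖∫ t in Set.Ioo (0:ℝ) 1, Θ t‖ ≤ ∫ t in Set.Ioo (0:ℝ) 1, ‖Θ t‖ :=
    norm_integral_le_integral_norm _
  refine ⟨hineq, ?_, ?_⟩
  · -- equality → structure
    intro heq
    by_cases h0 : ∀ᵐ t ∂μ, Θ t = 0
    · exact Or.inl h0
    right
    have hnormnonneg : 0 ≤ ∫ t, ‖Θ t‖ ∂μ := integral_nonneg fun t => norm_nonneg _
    have hpos : 0 < ∫ t, ‖Θ t‖ ∂μ := by
      rcases hnormnonneg.lt_or_eq with h | h
      · exact h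
      · exfalso
        apply h0
        have := (integral_eq_zero_iff_of_nonneg (fun t => norm_nonneg (Θ t)) hnint).1 h.symm
        filter_upwards [this] with t ht
        simpa using ht
    set v := ∫ t, Θ t ∂μ with hv
    have hvne : v ≠ 0 := by
      intro h
      rw [← heq, h, norm_zero] at hpos
      exact lt_irrefl _ hpos
    obtain ⟨g, hg1, hgv⟩ := exists_dual_vector ℝ v (norm_ne_zero_iff.2 hvne)
    have hgle : ∀ z : PiLp p (fun _ : Fin 2 => ℝ), g z ≤ ‖z‖ := by
      intro z
      calc g z ≤ |g z| := le_abs_self _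
      _ = ‖g z‖ := (Real.norm_eq_abs _).symm
      _ ≤ ‖g‖ * ‖z‖ := g.le_opNorm z
      _ = ‖z‖ := by rw [hg1, one_mul]
    have hgint : Integrable (fun t => g (Θ t)) μ := g.integrable_comp hint
    have hintg : ∫ t, g (Θ t) ∂μ = g v := (g.integral_comp_comm hint).symm ▸ rfl
    have hzero : ∫ t, (‖Θ t‖ - g (Θ t)) ∂μ = 0 := by
      rw [integral_sub hnint hgint, hintg, hgv]
      have : ‖v‖ = ∫ t, ‖Θ t‖ ∂μ := heq
      rw [this]; simp
    have key : ∀ᵐ t ∂μ, ‖Θ t‖ - g (Θ t) = 0 := by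
      have := (integral_eq_zero_iff_of_nonneg
        (fun t => sub_nonneg.2 (hgle (Θ t))) (hnint.sub hgint)).1 hzero
      filter_upwards [this] with t ht using ht
    set M : Set ℝ := Set.Ioo (0:ℝ) 1 ∩ {t | g (Θ t) = ‖Θ t‖} with hM
    have hnull : volume (Set.Ioo (0:ℝ) 1 \ M) = 0 := by
      have hsub : Set.Ioo (0:ℝ) 1 \ M ⊆ {t | ¬ (‖Θ t‖ - g (Θ t) = 0)} ∩ Set.Ioo (0:ℝ) 1 := by
        rintro t ⟨ht1, ht2⟩
        refine ⟨fun h => ht2 ⟨ht1, ?_⟩, ht1⟩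
        exact (sub_eq_zero.1 h).symm
      refine measure_mono_null hsub ?_
      rw [← Measure.restrict_apply' hIoo]
      exact ae_iff.1 key
    have ht₀ : ∃ t₀ ∈ M, Θ t₀ ≠ 0 := by
      by_contra h
      push_neg at h
      apply h0
      rw [ae_iff]
      rw [hμ, Measure.restrict_apply' hIoo]
      refine measure_mono_null ?_ hnull
      rintro t ⟨ht1, ht2⟩
      exact ⟨ht2, fun htM => ht1 (h t htM)⟩
    obtain ⟨t₀, ht₀M, ht₀ne⟩ := ht₀
    refine ⟨M, Set.inter_subset_left, hnull, t₀, ht₀M, ht₀ne, fun t ht => ?_⟩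
    have hsr : SameRay ℝ (Θ t) (Θ t₀) := by
      rw [sameRay_iff_norm_add]
      refine le_antisymm (norm_add_le _ _) ?_
      have e1 : g (Θ t) = ‖Θ t‖ := ht.2
      have e2 : g (Θ t₀) = ‖Θ t₀‖ := ht₀M.2
      calc ‖Θ t‖ + ‖Θ t₀‖ = g (Θ t + Θ t₀) := by rw [map_add, e1, e2]
      _ ≤ ‖Θ t + Θ t₀‖ := hgle _
    obtain ⟨l, hl, hle⟩ := hsr.exists_nonneg_right ht₀ne
    exact ⟨l, hl, hle⟩
  · -- structure → equality
    rintro (h0 | ⟨M, hMsub, hMnull, t₀, ht₀M, ht₀ne, hl⟩)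
    · have h1 : ∫ t, Θ t ∂μ = 0 := by
        rw [integral_congr_ae h0, integral_zero]
      have h2 : ∫ t, ‖Θ t‖ ∂μ = 0 := by
        rw [integral_congr_ae (show (fun t => ‖Θ t‖) =ᵐ[μ] 0 by
          filter_upwards [h0] with t ht; simp [ht])]; simp
      rw [hμ] at h1 h2 ⊢
      rw [h1, h2, norm_zero]
    · set c := ‖Θ t₀‖ with hc
      have hc0 : 0 < c := norm_pos_iff.2 ht₀ne
      have hae : ∀ᵐ t ∂μ, Θ t = (‖Θ t‖ / c) • Θ t₀ := by
        rw [ae_iff, hμ, Measure.restrict_apply' hIoo]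
        refine measure_mono_null ?_ hMnull
        rintro t ⟨ht1, ht2⟩
        refine ⟨ht2, fun htM => ht1 ?_⟩
        obtain ⟨l, hl0, hle⟩ := hl t htM
        have : ‖Θ t‖ = l * c := by rw [hle, norm_smul, Real.norm_eq_abs, abs_of_nonneg hl0]
        rw [this, hle]
        congr 1
        field_simp
      have h1 : ∫ t, Θ t ∂μ = (∫ t, ‖Θ t‖ / c ∂μ) • Θ t₀ := by
        rw [integral_congr_ae hae, integral_smul_const]
      have h2 : ∫ t, ‖Θ t‖ / c ∂μ = (∫ t, ‖Θ t‖ ∂μ) / c := integral_div c _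
      rw [hμ] at h1 ⊢
      rw [h1, norm_smul, Real.norm_eq_abs, ← hμ, h2, abs_of_nonneg
        (div_nonneg (integral_nonneg fun t => norm_nonneg _) hc0.le), ← hc,
        div_mul_cancel₀ _ hc0.ne']
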